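/- Let B be a reduced abelian p-group, S a finite subgroup of B, and β an ordinal. Then: (i) for every x ∈ S ∩ B_β with px ∈ B_{β+2} there exists y ∈ B_{β+1} with py = px; (ii) for any such y, the element x − y lies in P_β(B); (iii) the coset of x − y in P_β(B)/P_{β+1}(B) does not depend on the choice of y; and (iv) the assignment x ↦ (coset of x − y) induces a well-defined injective ℤ/pℤ-linear map F : (S ∩ B_β ∩ p^{-1}B_{β+2})/(S ∩ B_{β+1}) → P_β(B)/P_{β+1}(B), where p^{-1}B_{β+2} = {x ∈ B : px ∈ B_{β+2}}. -/

import Mathlib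

open Ordinal

/-- Scalar multiplication by `p` as an additive group homomorphism. -/
def pHom (p : ℕ) (G : Type*) [AddCommGroup G] : G →+ G :=
  AddMonoidHom.mk' (fun x => p • x) (fun a b => smul_add p a b)

@[simp] lemma pHom_apply (p : ℕ) {G : Type*} [AddCommGroup G] (x : G) :
    pHom p G x = p • x := rfl

/-- The Ulm subgroups `G_β`: `G_0 = G`, `G_{β+1} = pG_β`, and intersections at limits. -/
noncomputable def ulmSub (p : ℕ) (G : Type*) [AddCommGroup G] (β : Ordinal.{0}) :
    AddSubgroup G :=
  Ordinal.limitRecOn β ⊤ (fun _ H => AddSubgroup.map (pHom p G) H)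
    (fun o _ ih => ⨅ (γ : Ordinal.{0}) (h : γ < o), ih γ h)

lemma ulmSub_succ (p : ℕ) (G : Type*) [AddCommGroup G] (β : Ordinal.{0}) :
    ulmSub p G (β + 1) = AddSubgroup.map (pHom p G) (ulmSub p G β) := by
  unfold ulmSub
  rw [Ordinal.add_one_eq_succ, Ordinal.limitRecOn_succ]

lemma ulmSub_succ_le (p : ℕ) (G : Type*) [AddCommGroup G] (β : Ordinal.{0}) :
    ulmSub p G (β + 1) ≤ ulmSub p G β := by
  rw [ulmSub_succ]
  rintro x ⟨y, hy, rfl⟩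
  simpa using (ulmSub p G β).nsmul_mem hy p

/-- An abelian `p`-group: every element is killed by some power of `p`. -/
def IsAbelianPGroup (p : ℕ) (G : Type*) [AddCommGroup G] : Prop :=
  ∀ x : G, ∃ n : ℕ, p ^ n • x = 0

/-- The length `λ(G)`: the least ordinal `β` with `G_β = G_{β+1}`. -/
noncomputable def ulmLength (p : ℕ) (G : Type*) [AddCommGroup G] : Ordinal.{0} :=
  sInf {β : Ordinal.{0} | ulmSub p G β = ulmSub p G (β + 1)}

/-- `G` is reduced if `G_{λ(G)} = {0}`. -/
def IsReducedPGroup (p : ℕ) (G : Type*) [AddCommGroup G] : Prop :=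
  ulmSub p G (ulmLength p G) = ⊥

/-- `P_β(G) = {x ∈ G_β : px = 0}`. -/
noncomputable def ulmP (p : ℕ) (G : Type*) [AddCommGroup G] (β : Ordinal.{0}) : AddSubgroup G :=
  (pHom p G).ker ⊓ ulmSub p G β

/-- The quotient `P_β(G)/P_{β+1}(G)` (as a quotient of `P_β(G)` by the subgroup
corresponding to `P_{β+1}(G)`). -/
noncomputable def ulmQuot (p : ℕ) (G : Type*) [AddCommGroup G] (β : Ordinal.{0}) :=
  (ulmP p G β) ⧸ ((ulmP p G (β + 1)).addSubgroupOf (ulmP p G β))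

noncomputable instance (p : ℕ) (G : Type*) [AddCommGroup G] (β : Ordinal.{0}) :
    AddCommGroup (ulmQuot p G β) :=
  inferInstanceAs (AddCommGroup ((ulmP p G β) ⧸ ((ulmP p G (β + 1)).addSubgroupOf (ulmP p G β))))

noncomputable instance (p : ℕ) (G : Type*) [AddCommGroup G] (β : Ordinal.{0}) :
    Module (ZMod p) (ulmQuot p G β) :=
  QuotientAddGroup.zmodModule (by
    intro x
    simp only [AddSubgroup.mem_addSubgroupOf]
    have hx : ((p • x : ulmP p G β) : G) = 0 := by
      have := x.2.1
      change p • (x : G) = 0 at this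
      simpa using this
    rw [hx]
    exact (ulmP p G (β + 1)).zero_mem)

/-- The Ulm invariant `u_β(G)`: the dimension of `P_β(G)/P_{β+1}(G)` over `ℤ/pℤ`. -/
noncomputable def ulmInvariant (p : ℕ) (G : Type*) [AddCommGroup G] (β : Ordinal.{0}) :
    Cardinal :=
  Module.rank (ZMod p) (ulmQuot p G β)

open Classical in
/-- The height of `x`: the unique ordinal `β` with `x ∈ G_β \ G_{β+1}` if it exists, and `∞`
(= `⊤`) otherwise. -/
noncomputable def height (p : ℕ) {G : Type*} [AddCommGroup G] (x : G) : WithTop Ordinal.{0} :=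
  if ∃ β : Ordinal.{0}, x ∈ ulmSub p G β ∧ x ∉ ulmSub p G (β + 1) then
    ((sInf {β : Ordinal.{0} | x ∈ ulmSub p G β ∧ x ∉ ulmSub p G (β + 1)} : Ordinal.{0}) :
      WithTop Ordinal.{0})
  else ⊤

/-- `d` is proper with respect to `S` if `h(d) ≥ h(d+s)` for every `s ∈ S`. -/
def ProperWRT (p : ℕ) {G : Type*} [AddCommGroup G] (S : AddSubgroup G) (d : G) : Prop :=
  ∀ s ∈ S, height p (d + s) ≤ height p d

/-- The subgroup `S ∩ B_β ∩ p⁻¹B_{β+2}`, where `p⁻¹B_{β+2} = {x : px ∈ B_{β+2}}`. -/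
noncomputable def kapSub (p : ℕ) {B : Type*} [AddCommGroup B] (S : AddSubgroup B)
    (β : Ordinal.{0}) : AddSubgroup B :=
  S ⊓ ulmSub p B β ⊓ (ulmSub p B (β + 2)).comap (pHom p B)

/-- The quotient `(S ∩ B_β ∩ p⁻¹B_{β+2}) / (S ∩ B_{β+1})`. -/
noncomputable def kapQuot (p : ℕ) {B : Type*} [AddCommGroup B] (S : AddSubgroup B)
    (β : Ordinal.{0}) :=
  kapSub p S β ⧸ ((S ⊓ ulmSub p B (β + 1)).addSubgroupOf (kapSub p S β))

noncomputable instance (p : ℕ) {B : Type*} [AddCommGroup B] (S : AddSubgroup B)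
    (β : Ordinal.{0}) : AddCommGroup (kapQuot p S β) :=
  inferInstanceAs
    (AddCommGroup (kapSub p S β ⧸ ((S ⊓ ulmSub p B (β + 1)).addSubgroupOf (kapSub p S β))))

noncomputable instance (p : ℕ) {B : Type*} [AddCommGroup B] (S : AddSubgroup B)
    (β : Ordinal.{0}) : Module (ZMod p) (kapQuot p S β) :=
  QuotientAddGroup.zmodModule (by
    intro x
    have hx := x.2
    simp only [kapSub, AddSubgroup.mem_inf, AddSubgroup.mem_comap, pHom_apply] at hx
    simp only [AddSubgroup.mem_addSubgroupOf, AddSubgroup.mem_inf]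
    have hc : ((p • x : kapSub p S β) : B) = p • (x : B) := rfl
    rw [hc]
    refine ⟨S.nsmul_mem hx.1.1 p, ?_⟩
    have h2 : (β + 2 : Ordinal.{0}) = (β + 1) + 1 := by
      rw [add_assoc]; norm_num
    exact ulmSub_succ_le p B (β + 1) (by rw [← h2]; exact hx.2))

/-- Kaplansky's lemma, part 1: existence and well-definedness of the induced injective
`ℤ/pℤ`-linear map `F : (S ∩ B_β ∩ p⁻¹B_{β+2})/(S ∩ B_{β+1}) → P_β(B)/P_{β+1}(B)`. -/
theorem kaplansky_map (p : ℕ) (hp : p.Prime) (B : Type) [AddCommGroup B]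
    (hB : IsAbelianPGroup p B) (hred : IsReducedPGroup p B)
    (S : AddSubgroup B) (hS : (S : Set B).Finite) (β : Ordinal.{0}) :
    (∀ x ∈ S, x ∈ ulmSub p B β → p • x ∈ ulmSub p B (β + 2) →
      ∃ y ∈ ulmSub p B (β + 1), p • y = p • x) ∧
    (∀ x ∈ S, x ∈ ulmSub p B β → p • x ∈ ulmSub p B (β + 2) →
      ∀ y ∈ ulmSub p B (β + 1), p • y = p • x → x - y ∈ ulmP p B β) ∧
    (∀ x ∈ S, x ∈ ulmSub p B β → p • x ∈ ulmSub p B (β + 2) →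
      ∀ y ∈ ulmSub p B (β + 1), p • y = p • x →
      ∀ y' ∈ ulmSub p B (β + 1), p • y' = p • x →
        (x - y) - (x - y') ∈ ulmP p B (β + 1)) ∧
    ∃ F : kapQuot p S β →ₗ[ZMod p] ulmQuot p B β,
      Function.Injective F ∧
      ∀ (x : B) (hx : x ∈ kapSub p S β) (y : B), y ∈ ulmSub p B (β + 1) →
        p • y = p • x → ∀ hxy : x - y ∈ ulmP p B β,
        F (QuotientAddGroup.mk (⟨x, hx⟩ : kapSub p S β)) =
          QuotientAddGroup.mk (⟨x - y, hxy⟩ : ulmP p B β) := by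
  classical
  have h2 : (β + 2 : Ordinal.{0}) = (β + 1) + 1 := by rw [add_assoc]; norm_num
  -- existence of y
  have hex : ∀ x : B, p • x ∈ ulmSub p B (β + 2) →
      ∃ y ∈ ulmSub p B (β + 1), p • y = p • x := by
    intro x hx
    rw [h2, ulmSub_succ] at hx
    obtain ⟨y, hy, hpy⟩ := hx
    exact ⟨y, hy, by simpa using hpy⟩
  -- (ii)
  have hii : ∀ x : B, x ∈ ulmSub p B β → ∀ y ∈ ulmSub p B (β + 1), p • y = p • x →
      x - y ∈ ulmP p B β := by
    intro x hx y hy hpy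
    refine ⟨AddMonoidHom.mem_ker.mpr ?_, (ulmSub p B β).sub_mem hx (ulmSub_succ_le p B β hy)⟩
    rw [pHom_apply, smul_sub, hpy, _root_.sub_self]
  -- (iii)
  have hiii : ∀ x : B, ∀ y ∈ ulmSub p B (β + 1), p • y = p • x →
      ∀ y' ∈ ulmSub p B (β + 1), p • y' = p • x →
      (x - y) - (x - y') ∈ ulmP p B (β + 1) := by
    intro x y hy hpy y' hy' hpy'
    have : (x - y) - (x - y') = y' - y := by abel
    rw [this]
    refine ⟨AddMonoidHom.mem_ker.mpr ?_, (ulmSub p B (β + 1)).sub_mem hy' hy⟩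
    rw [pHom_apply, smul_sub, hpy', hpy, _root_.sub_self]
  refine ⟨fun x _ _ h => hex x h, fun x _ hx _ y hy hpy => hii x hx y hy hpy,
    fun x _ _ _ y hy hpy y' hy' hpy' => hiii x y hy hpy y' hy' hpy', ?_⟩
  -- choice of y
  have hmem : ∀ x : kapSub p S β, p • (x : B) ∈ ulmSub p B (β + 2) := fun x => x.2.2
  set yc : kapSub p S β → B := fun x => (hex x (hmem x)).choose with hyc
  have hy1 : ∀ x, yc x ∈ ulmSub p B (β + 1) := fun x => (hex x (hmem x)).choose_spec.1
  have hy2 : ∀ x, p • yc x = p • (x : B) := fun x => (hex x (hmem x)).choose_spec.2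
  -- independence
  have indep : ∀ (a b : B) (ha : a ∈ ulmP p B β) (hb : b ∈ ulmP p B β),
      a - b ∈ ulmP p B (β + 1) →
      (QuotientAddGroup.mk (⟨a, ha⟩ : ulmP p B β) : ulmQuot p B β) =
        QuotientAddGroup.mk ⟨b, hb⟩ := by
    intro a b ha hb hab
    rw [QuotientAddGroup.eq]
    have : -a + b = -(a - b) := by abel
    simp only [AddSubgroup.mem_addSubgroupOf]
    show (-(⟨a, ha⟩ : ulmP p B β) + ⟨b, hb⟩ : ulmP p B β).1 ∈ ulmP p B (β + 1)
    show -a + b ∈ ulmP p B (β + 1)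
    rw [this]
    exact (ulmP p B (β + 1)).neg_mem hab
  -- underlying map
  set f : kapSub p S β → ulmQuot p B β := fun x =>
    QuotientAddGroup.mk ⟨(x : B) - yc x, hii x x.2.1.2 (yc x) (hy1 x) (hy2 x)⟩ with hf
  have fspec : ∀ (x : kapSub p S β) (y : B), y ∈ ulmSub p B (β + 1) → p • y = p • (x : B) →
      ∀ hxy : (x : B) - y ∈ ulmP p B β, f x = QuotientAddGroup.mk ⟨(x : B) - y, hxy⟩ := by
    intro x y hy hpy hxy
    exact indep _ _ _ _ (hiii x (yc x) (hy1 x) (hy2 x) y hy hpy)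
  have fadd : ∀ a b : kapSub p S β, f (a + b) = f a + f b := by
    intro a b
    have hysum : yc a + yc b ∈ ulmSub p B (β + 1) :=
      (ulmSub p B (β + 1)).add_mem (hy1 a) (hy1 b)
    have hps : p • (yc a + yc b) = p • ((a + b : kapSub p S β) : B) := by
      push_cast
      rw [smul_add, hy2 a, hy2 b, smul_add]
    have hmem' : ((a + b : kapSub p S β) : B) - (yc a + yc b) ∈ ulmP p B β :=
      hii _ (a + b).2.1.2 _ hysum hps
    rw [fspec (a + b) (yc a + yc b) hysum hps hmem']
    show _ = QuotientAddGroup.mk _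
    exact congrArg QuotientAddGroup.mk (Subtype.ext (by push_cast; abel))
  set g : kapSub p S β →+ ulmQuot p B β := AddMonoidHom.mk' f fadd with hg
  have hker : ∀ z ∈ (S ⊓ ulmSub p B (β + 1)).addSubgroupOf (kapSub p S β), g z = 0 := by
    intro z hz
    simp only [AddSubgroup.mem_addSubgroupOf, AddSubgroup.mem_inf] at hz
    have hz1 : (z : B) ∈ ulmSub p B (β + 1) := hz.2
    show f z = 0
    have hps : p • (z : B) = p • (z : B) := rfl
    have hm : (z : B) - (z : B) ∈ ulmP p B β := hii _ z.2.1.2 _ hz1 hps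
    rw [fspec z (z : B) hz1 hps hm]
    refine (QuotientAddGroup.eq_zero_iff _).mpr ?_
    simp only [AddSubgroup.mem_addSubgroupOf]
    show (z : B) - (z : B) ∈ ulmP p B (β + 1)
    rw [_root_.sub_self]
    exact (ulmP p B (β + 1)).zero_mem
  set Fadd : kapQuot p S β →+ ulmQuot p B β := QuotientAddGroup.lift _ g hker with hF
  refine ⟨Fadd.toZModLinearMap p, ?_, ?_⟩
  · rw [injective_iff_map_eq_zero]
    intro q hq
    induction q using QuotientAddGroup.induction_on with
    | H x =>
      have hfx : f x = 0 := hq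
      have hxy : (x : B) - yc x ∈ ulmP p B β := hii _ x.2.1.2 _ (hy1 x) (hy2 x)
      rw [hf] at hfx
      replace hfx := (QuotientAddGroup.eq_zero_iff _).mp hfx
      simp only [AddSubgroup.mem_addSubgroupOf] at hfx
      have hfx' : (x : B) - yc x ∈ ulmP p B (β + 1) := hfx
      have hxm : (x : B) ∈ ulmSub p B (β + 1) := by
        have := (ulmSub p B (β + 1)).add_mem hfx'.2 (hy1 x)
        simpa using this
      refine (QuotientAddGroup.eq_zero_iff _).mpr ?_
      simp only [AddSubgroup.mem_addSubgroupOf, AddSubgroup.mem_inf]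
      exact ⟨x.2.1.1, hxm⟩
  · intro x hx y hy hpy hxy
    exact fspec ⟨x, hx⟩ y hy hpy hxy
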